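/- Let A, B be nonempty closed convex subsets of a uniformly convex Banach space X, and T a p-cyclic φ-contraction mapping. Then T has a unique coupled best proximity point, i.e., a unique (x,y) ∈ A × B with ‖x − T(x,y)‖ = dist(A,B) and ‖y − T(y,x)‖ = dist(A,B). -/
import Mathlib

open Filter Topology

/-- `setDist A B = inf {‖a - b‖ : a ∈ A, b ∈ B}`. -/
noncomputable def setDist {X : Type*} [NormedAddCommGroup X] (A B : Set X) : ℝ :=
  sInf {d : ℝ | ∃ a ∈ A, ∃ b ∈ B, d = ‖a - b‖}

lemma setDist_le'' {X : Type*} [NormedAddCommGroup X] {A B : Set X} {a b : X}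
    (ha : a ∈ A) (hb : b ∈ B) : setDist A B ≤ ‖a - b‖ := by
  apply csInf_le
  · exact ⟨0, by rintro r ⟨a, -, b, -, rfl⟩; positivity⟩
  · exact ⟨a, ha, b, hb, rfl⟩

lemma setDist_nonneg'' {X : Type*} [NormedAddCommGroup X] {A B : Set X}
    (hA : A.Nonempty) (hB : B.Nonempty) : 0 ≤ setDist A B := by
  obtain ⟨a, ha⟩ := hA; obtain ⟨b, hb⟩ := hB
  refine le_csInf ⟨_, a, ha, b, hb, rfl⟩ ?_
  rintro r ⟨a, -, b, -, rfl⟩; positivity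

lemma tri'' {X : Type*} [NormedAddCommGroup X] (a b c : X) : ‖a - c‖ ≤ ‖a - b‖ + ‖b - c‖ := by
  simpa using norm_add_le (a - b) (b - c)

lemma prox_unique'' {X : Type*} [NormedAddCommGroup X] [NormedSpace ℝ X] [UniformConvexSpace X]
    {d : ℝ} {a₁ a₂ b : X} (h₁ : ‖a₁ - b‖ = d) (h₂ : ‖a₂ - b‖ = d)
    (hmid : d ≤ ‖(1/2 : ℝ) • a₁ + (1/2 : ℝ) • a₂ - b‖) : a₁ = a₂ := by
  by_contra hne
  have hne' : a₁ - b ≠ a₂ - b := fun h => hne (by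
    have := congrArg (· + b) h; simpa using this)
  have hlt := (norm_midpoint_lt_iff (x := a₁ - b) (y := a₂ - b) (h₁.trans h₂.symm)).2 hne'
  have heq : (1/2 : ℝ) • (a₁ - b + (a₂ - b)) = (1/2 : ℝ) • a₁ + (1/2 : ℝ) • a₂ - b := by
    module
  rw [heq, h₁] at hlt
  linarith

lemma uc_key'' {X : Type*} [NormedAddCommGroup X] [NormedSpace ℝ X] [UniformConvexSpace X]
    {d : ℝ} (hd : 0 ≤ d) {ε : ℝ} (hε : 0 < ε) :
    ∃ δ > 0, ∀ x z y : X, ‖x - y‖ ≤ d + δ → ‖z - y‖ ≤ d + δ →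
      d ≤ ‖(1/2 : ℝ) • x + (1/2 : ℝ) • z - y‖ → ‖x - z‖ ≤ ε := by
  rcases eq_or_lt_of_le hd with h0 | hdpos
  · refine ⟨ε/2, by positivity, fun x z y hx hz _ => ?_⟩
    calc ‖x - z‖ ≤ ‖x - y‖ + ‖y - z‖ := tri'' x y z
    _ ≤ (d + ε/2) + (d + ε/2) := add_le_add hx (by rwa [norm_sub_rev])
    _ ≤ ε := by rw [← h0]; linarith
  · obtain ⟨δ', hδ', hkey⟩ := exists_forall_closed_ball_dist_add_le_two_sub X
      (div_pos hε (by linarith : (0:ℝ) < d + 1))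
    refine ⟨min 1 (d * δ' / 4), by positivity, fun x z y hx hz hmid => ?_⟩
    set δ := min 1 (d * δ' / 4) with hδdef
    have hδ1 : δ ≤ 1 := min_le_left _ _
    have hδ2 : δ ≤ d * δ' / 4 := min_le_right _ _
    have hδ0 : 0 < δ := by positivity
    by_contra hbig
    push_neg at hbig
    have hs : (0:ℝ) < d + δ := by linarith
    have hu : ‖(d + δ)⁻¹ • (x - y)‖ ≤ 1 := by
      rw [norm_smul, Real.norm_eq_abs, abs_of_pos (by positivity)]
      rw [inv_mul_le_iff₀ hs]; simpa using hx
    have hv : ‖(d + δ)⁻¹ • (z - y)‖ ≤ 1 := by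
      rw [norm_smul, Real.norm_eq_abs, abs_of_pos (by positivity)]
      rw [inv_mul_le_iff₀ hs]; simpa using hz
    have hdist : ε / (d + 1) ≤ ‖(d + δ)⁻¹ • (x - y) - (d + δ)⁻¹ • (z - y)‖ := by
      rw [← smul_sub, norm_smul, Real.norm_eq_abs, abs_of_pos (by positivity)]
      have hxz : x - y - (z - y) = x - z := by abel
      rw [hxz, div_le_iff₀ (by linarith : (0:ℝ) < d + 1), mul_comm]
      calc ε ≤ ‖x - z‖ * 1 := by rw [mul_one]; exact hbig.le
      _ ≤ ‖x - z‖ * ((d + 1) * (d + δ)⁻¹) := by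
          apply mul_le_mul_of_nonneg_left _ (norm_nonneg _)
          rw [le_mul_inv_iff₀ hs]; linarith
      _ = (d + 1) * ((d + δ)⁻¹ * ‖x - z‖) := by ring
    have hsum := hkey hu hv hdist
    rw [← smul_add, norm_smul, Real.norm_eq_abs, abs_of_pos (by positivity),
      inv_mul_le_iff₀ hs] at hsum
    have hmid2 : (1/2 : ℝ) • x + (1/2 : ℝ) • z - y = (1/2 : ℝ) • (x - y + (z - y)) := by
      module
    have hnorm : ‖(1/2 : ℝ) • x + (1/2 : ℝ) • z - y‖ ≤ (1/2) * ((2 - δ') * (d + δ)) := by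
      rw [hmid2, norm_smul, Real.norm_eq_abs]
      have : |(1/2 : ℝ)| = 1/2 := by norm_num
      rw [this]
      nlinarith [norm_nonneg (x - y + (z - y))]
    have hδ'2 : δ' * (d + δ) ≥ δ' * d := by nlinarith
    nlinarith [hmid, hnorm]

theorem stmt10 {X : Type*} [NormedAddCommGroup X] [NormedSpace ℝ X] [UniformConvexSpace X] [CompleteSpace X]
    (A B : Set X) (hA : A.Nonempty) (hB : B.Nonempty)
    (T : X → X → X) (φ : ℝ → ℝ)
    (hφmono : StrictMonoOn φ (Set.Ici 0)) (hφpos : ∀ t ≥ (0:ℝ), 0 ≤ φ t)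
    (hTB : ∀ x ∈ A, ∀ y ∈ B, T x y ∈ B)
    (hTA : ∀ x ∈ B, ∀ y ∈ A, T x y ∈ A)
    (hT : ∀ x₁ ∈ A, ∀ y₁ ∈ B, ∀ x₂ ∈ B, ∀ y₂ ∈ A,
      ‖T x₁ y₁ - T x₂ y₂‖ ≤ ‖((x₁, y₁) : X × X) - (x₂, y₂)‖
        - φ ‖((x₁, y₁) : X × X) - (x₂, y₂)‖ + φ (setDist A B))
    (hAcl : IsClosed A) (hBcl : IsClosed B) (hAconv : Convex ℝ A) (hBconv : Convex ℝ B) :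
    ∃! p : X × X, p.1 ∈ A ∧ p.2 ∈ B ∧
      ‖p.1 - T p.1 p.2‖ = setDist A B ∧ ‖p.2 - T p.2 p.1‖ = setDist A B := by
  obtain ⟨x₀, hx₀⟩ := hA
  obtain ⟨y₀, hy₀⟩ := hB
  set d := setDist A B with hd_def
  have hd0 : 0 ≤ d := setDist_nonneg'' ⟨x₀, hx₀⟩ ⟨y₀, hy₀⟩
  have hdle : ∀ {a b : X}, a ∈ A → b ∈ B → d ≤ ‖a - b‖ := fun ha hb => setDist_le'' ha hb
  have hφle : ∀ {s t : ℝ}, 0 ≤ s → s ≤ t → φ s ≤ φ t := fun {s t} hs hst =>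
    hφmono.monotoneOn hs (le_trans hs hst) hst
  have hφlt : ∀ {s t : ℝ}, 0 ≤ s → s < t → φ s < φ t := fun {s t} hs hst =>
    hφmono hs (le_trans hs hst.le) hst
  -- contraction in max form
  have hT' : ∀ x₁ ∈ A, ∀ y₁ ∈ B, ∀ x₂ ∈ B, ∀ y₂ ∈ A,
      ‖T x₁ y₁ - T x₂ y₂‖ ≤ max ‖x₁ - x₂‖ ‖y₁ - y₂‖
        - φ (max ‖x₁ - x₂‖ ‖y₁ - y₂‖) + φ d := by
    intro x₁ h₁ y₁ h₂ x₂ h₃ y₂ h₄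
    have := hT x₁ h₁ y₁ h₂ x₂ h₃ y₂ h₄
    simpa [Prod.norm_def, Prod.mk_sub_mk] using this
    -- the orbit
  set P : ℕ → X × X := fun n => Nat.rec (x₀, y₀) (fun _ p => (T p.1 p.2, T p.2 p.1)) n with hP_def
  have hPsucc1 : ∀ n, (P (n+1)).1 = T (P n).1 (P n).2 := fun n => rfl
  have hPsucc2 : ∀ n, (P (n+1)).2 = T (P n).2 (P n).1 := fun n => rfl
  have hmem : ∀ n, (Even n → (P n).1 ∈ A ∧ (P n).2 ∈ B) ∧
      (¬ Even n → (P n).1 ∈ B ∧ (P n).2 ∈ A) := by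
    intro n
    induction n with
    | zero => exact ⟨fun _ => ⟨hx₀, hy₀⟩, fun h => absurd Even.zero h⟩
    | succ n ih =>
      constructor
      · intro he
        have hno : ¬ Even n := by simpa [Nat.even_add_one] using he
        obtain ⟨h1, h2⟩ := ih.2 hno
        exact ⟨hTA _ h1 _ h2, hTB _ h2 _ h1⟩
      · intro ho
        have he : Even n := by
          by_contra h
          exact ho (by simpa [Nat.even_add_one] using h)
        obtain ⟨h1, h2⟩ := ih.1 he
        exact ⟨hTB _ h1 _ h2, hTA _ h2 _ h1⟩
  set Q : ℕ → ℕ → ℝ := fun m n => max ‖(P m).1 - (P n).1‖ ‖(P m).2 - (P n).2‖ with hQ_def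
  have hQsymm : ∀ m n, Q m n = Q n m := by
    intro m n
    show max ‖(P m).1 - (P n).1‖ ‖(P m).2 - (P n).2‖ = _
    rw [norm_sub_rev, norm_sub_rev ((P m).2)]
  have hQnonneg : ∀ m n, 0 ≤ Q m n := fun m n => le_trans (norm_nonneg _) (le_max_left _ _)
  have hdQE : ∀ m n, Even m → ¬ Even n → d ≤ Q m n := by
    intro m n hm hn
    exact le_trans (hdle ((hmem m).1 hm).1 ((hmem n).2 hn).1) (le_max_left _ _)
  have hdQO : ∀ m n, ¬ Even m → Even n → d ≤ Q m n := by
    intro m n hm hn; rw [hQsymm]; exact hdQE n m hn hm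
  have hstepE : ∀ m n, Even m → ¬ Even n → Q (m+1) (n+1) ≤ Q m n - φ (Q m n) + φ d := by
    intro m n hm hn
    obtain ⟨hmA, hmB⟩ := (hmem m).1 hm
    obtain ⟨hnB, hnA⟩ := (hmem n).2 hn
    have c1 : ‖(P (m+1)).1 - (P (n+1)).1‖ ≤ Q m n - φ (Q m n) + φ d := by
      rw [hPsucc1, hPsucc1]
      exact hT' _ hmA _ hmB _ hnB _ hnA
    have c2 : ‖(P (m+1)).2 - (P (n+1)).2‖ ≤ Q m n - φ (Q m n) + φ d := by
      rw [hPsucc2, hPsucc2, norm_sub_rev]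
      have := hT' _ hnA _ hnB _ hmB _ hmA
      have hmax : max ‖(P n).2 - (P m).2‖ ‖(P n).1 - (P m).1‖ = Q m n := by
        rw [norm_sub_rev, norm_sub_rev ((P n).1), max_comm]
      rwa [hmax] at this
    exact max_le c1 c2
  have hstepO : ∀ m n, ¬ Even m → Even n → Q (m+1) (n+1) ≤ Q m n - φ (Q m n) + φ d := by
    intro m n hm hn
    rw [hQsymm (m+1) (n+1), hQsymm m n]
    exact hstepE n m hn hm
  -- consecutive distances
  set D : ℕ → ℝ := fun n => Q n (n+1) with hD_def
  have hDd : ∀ n, d ≤ D n := by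
    intro n
    rcases Nat.even_or_odd n with h | h
    · exact hdQE n (n+1) h (by simpa [Nat.even_add_one] using h)
    · exact hdQO n (n+1) (Nat.not_even_iff_odd.mpr h)
        (by simpa [Nat.even_add_one] using Nat.not_even_iff_odd.mpr h)
  have hDstep : ∀ n, D (n+1) ≤ D n - φ (D n) + φ d := by
    intro n
    rcases Nat.even_or_odd n with h | h
    · exact hstepE n (n+1) h (by simpa [Nat.even_add_one] using h)
    · exact hstepO n (n+1) (Nat.not_even_iff_odd.mpr h)
        (by simpa [Nat.even_add_one] using Nat.not_even_iff_odd.mpr h)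
  have hDanti : ∀ n, D (n+1) ≤ D n := by
    intro n
    have h1 := hDstep n
    have h2 : φ d ≤ φ (D n) := hφle hd0 (hDd n)
    linarith
  have hDantitone : Antitone D := antitone_nat_of_succ_le hDanti
  -- no uniform decrease
  have hnodrop : ∀ c : ℝ, 0 < c → ¬ (∀ n, D (n+1) ≤ D n - c) := by
    intro c hc hall
    have hlin : ∀ n : ℕ, D n ≤ D 0 - n * c := by
      intro n
      induction n with
      | zero => simp
      | succ n ih =>
        have := hall n
        push_cast
        push_cast at ih
        linarith
    obtain ⟨n, hn⟩ := exists_nat_gt ((D 0 - d) / c)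
    have := hlin n
    have hd' := hDd n
    rw [div_lt_iff₀ hc] at hn
    linarith
  -- D converges to d
  have hDbdd : BddBelow (Set.range D) := ⟨d, by rintro r ⟨n, rfl⟩; exact hDd n⟩
  have hL_eq : ⨅ n, D n = d := by
    set L := ⨅ n, D n with hL_def
    have hLd : d ≤ L := le_ciInf hDd
    have hLD : ∀ n, L ≤ D n := fun n => ciInf_le hDbdd n
    have hφL : φ L ≤ φ d := by
      by_contra h
      push_neg at h
      refine hnodrop (φ L - φ d) (by linarith) (fun n => ?_)
      have h1 := hDstep n
      have h2 : φ L ≤ φ (D n) := hφle (le_trans hd0 hLd) (hLD n)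
      linarith
    have : L ≤ d := by
      by_contra h
      push_neg at h
      exact absurd hφL (not_le.mpr (hφlt hd0 h))
    exact le_antisymm this hLd
  have hDsmall : ∀ δ : ℝ, 0 < δ → ∃ N, ∀ n ≥ N, D n ≤ d + δ := by
    intro δ hδ
    have : (⨅ n, D n) < d + δ := by rw [hL_eq]; linarith
    obtain ⟨N, hN⟩ := exists_lt_of_ciInf_lt this
    exact ⟨N, fun n hn => le_trans (hDantitone hn) hN.le⟩
  -- gaps of two go to zero
  set G : ℕ → ℝ := fun n => Q n (n+2) with hG_def
  have hGsmall : ∀ ε : ℝ, 0 < ε → ∃ N, ∀ n ≥ N, G n ≤ ε := by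
    intro ε hε
    obtain ⟨δ, hδ, hkey⟩ := uc_key'' (X := X) hd0 hε
    obtain ⟨N, hN⟩ := hDsmall δ hδ
    refine ⟨N, fun n hn => ?_⟩
    have h1 : ‖(P n).1 - (P (n+1)).1‖ ≤ d + δ :=
      le_trans (le_trans (le_max_left _ _) le_rfl) (hN n hn)
    have h1' : ‖(P n).2 - (P (n+1)).2‖ ≤ d + δ :=
      le_trans (le_max_right _ _) (hN n hn)
    have h2 : ‖(P (n+2)).1 - (P (n+1)).1‖ ≤ d + δ := by
      rw [norm_sub_rev]
      exact le_trans (le_max_left _ _) (hN (n+1) (le_trans hn (Nat.le_succ n)))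
    have h2' : ‖(P (n+2)).2 - (P (n+1)).2‖ ≤ d + δ := by
      rw [norm_sub_rev]
      exact le_trans (le_max_right _ _) (hN (n+1) (le_trans hn (Nat.le_succ n)))
    have hmemn := hmem n
    have hmemn1 := hmem (n+1)
    have hmemn2 := hmem (n+2)
    have hpar1 : Even (n+2) ↔ Even n := by simp [Nat.even_add]
    have hpar2 : ¬ Even (n+1) ↔ Even n := by simp [Nat.even_add_one]
    have hu : ‖(P n).1 - (P (n+2)).1‖ ≤ ε := by
      rcases Nat.even_or_odd n with h | h
      · have hmidA : (1/2 : ℝ) • (P n).1 + (1/2 : ℝ) • (P (n+2)).1 ∈ A :=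
          hAconv (hmemn.1 h).1 (hmemn2.1 (hpar1.mpr h)).1 (by norm_num) (by norm_num) (by norm_num)
        exact hkey _ _ _ h1 h2 (hdle hmidA ((hmemn1.2 (by simpa [Nat.even_add_one] using h)).1))
      · have h' : ¬ Even n := Nat.not_even_iff_odd.mpr h
        have hmidB : (1/2 : ℝ) • (P n).1 + (1/2 : ℝ) • (P (n+2)).1 ∈ B :=
          hBconv (hmemn.2 h').1 (hmemn2.2 (fun he => h' (hpar1.mp he))).1
            (by norm_num) (by norm_num) (by norm_num)
        refine hkey _ _ _ h1 h2 ?_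
        rw [← norm_sub_rev]
        exact hdle ((hmemn1.1 (Nat.even_add_one.mpr h')).1) hmidB
    have hv : ‖(P n).2 - (P (n+2)).2‖ ≤ ε := by
      rcases Nat.even_or_odd n with h | h
      · have hmidB : (1/2 : ℝ) • (P n).2 + (1/2 : ℝ) • (P (n+2)).2 ∈ B :=
          hBconv (hmemn.1 h).2 (hmemn2.1 (hpar1.mpr h)).2 (by norm_num) (by norm_num) (by norm_num)
        refine hkey _ _ _ h1' h2' ?_
        rw [← norm_sub_rev]
        exact hdle ((hmemn1.2 (by simpa [Nat.even_add_one] using h)).2) hmidB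
      · have h' : ¬ Even n := Nat.not_even_iff_odd.mpr h
        have hmidA : (1/2 : ℝ) • (P n).2 + (1/2 : ℝ) • (P (n+2)).2 ∈ A :=
          hAconv (hmemn.2 h').2 (hmemn2.2 (fun he => h' (hpar1.mp he))).2
            (by norm_num) (by norm_num) (by norm_num)
        exact hkey _ _ _ h1' h2' (hdle hmidA ((hmemn1.1 (Nat.even_add_one.mpr h')).2))
    exact max_le hu hv
  -- uniform bound on cross distances
  have hEven2 : ∀ m : ℕ, Even (2*m) := fun m => ⟨m, two_mul m⟩
  have hOdd2 : ∀ m : ℕ, ¬ Even (2*m+1) := fun m => by rw [Nat.even_iff]; omega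
  have hQuni : ∀ ε : ℝ, 0 < ε → ∃ N, ∀ m ≥ N, ∀ n ≥ N, Q (2*m) (2*n+1) ≤ d + ε := by
    intro ε hε
    have hη : 0 < (φ (d+ε) - φ d) / 3 := by
      have := hφlt hd0 (by linarith : d < d + ε)
      linarith
    obtain ⟨N, hN⟩ := hGsmall _ hη
    refine ⟨N, fun m hm n hn => ?_⟩
    by_contra hbig
    push_neg at hbig
    set a := Q (2*m) (2*n+1) with ha_def
    have s1 : Q (2*m+1) (2*n+2) ≤ a - φ a + φ d :=
      hstepE (2*m) (2*n+1) (hEven2 m) (hOdd2 n)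
    have s2 : Q (2*m+2) (2*n+3) ≤ Q (2*m+1) (2*n+2) := by
      have hev : Even (2*n+2) := by rw [Nat.even_iff]; omega
      have h1 := hstepO (2*m+1) (2*n+2) (hOdd2 m) hev
      have h2 : d ≤ Q (2*m+1) (2*n+2) := hdQO _ _ (hOdd2 m) hev
      have h3 : φ d ≤ φ (Q (2*m+1) (2*n+2)) := hφle hd0 h2
      have e1 : 2*m+1+1 = 2*m+2 := by omega
      have e2 : 2*n+2+1 = 2*n+3 := by omega
      rw [e1, e2] at h1
      linarith
    have hg1 : Q (2*m) (2*m+2) ≤ (φ (d+ε) - φ d) / 3 := by exact hN (2*m) (by omega)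
    have hg2 : Q (2*n+1) (2*n+3) ≤ (φ (d+ε) - φ d) / 3 := by exact hN (2*n+1) (by omega)
    -- triangle inequality for the max-distance
    have htri : ∀ i j k : ℕ, Q i k ≤ Q i j + Q j k := by
      intro i j k
      refine max_le ?_ ?_
      · calc ‖(P i).1 - (P k).1‖ ≤ ‖(P i).1 - (P j).1‖ + ‖(P j).1 - (P k).1‖ := tri'' _ _ _
        _ ≤ Q i j + Q j k := add_le_add (le_max_left _ _) (le_max_left _ _)
      · calc ‖(P i).2 - (P k).2‖ ≤ ‖(P i).2 - (P j).2‖ + ‖(P j).2 - (P k).2‖ := tri'' _ _ _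
        _ ≤ Q i j + Q j k := add_le_add (le_max_right _ _) (le_max_right _ _)
    have t1 : a ≤ Q (2*m) (2*m+2) + Q (2*m+2) (2*n+3) + Q (2*n+3) (2*n+1) :=
      le_trans (htri (2*m) (2*m+2) (2*n+1))
        (by linarith [htri (2*m+2) (2*n+3) (2*n+1)])
    rw [hQsymm (2*n+3) (2*n+1)] at t1
    have hfin : φ a ≤ φ d + 2 * ((φ (d+ε) - φ d) / 3) := by linarith
    have hge : φ (d + ε) ≤ φ a := hφle (by linarith) hbig.le
    linarith
  -- the even subsequences are Cauchy
  have hCu : CauchySeq (fun n => (P (2*n)).1) := by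
    rw [Metric.cauchySeq_iff]
    intro ε hε
    obtain ⟨δ, hδ, hkey⟩ := uc_key'' (X := X) hd0 (half_pos hε)
    obtain ⟨N, hN⟩ := hQuni δ hδ
    refine ⟨N, fun m hm n hn => ?_⟩
    have h1 : ‖(P (2*m)).1 - (P (2*n+1)).1‖ ≤ d + δ :=
      le_trans (le_max_left _ _) (hN m hm n hn)
    have h2 : ‖(P (2*n)).1 - (P (2*n+1)).1‖ ≤ d + δ :=
      le_trans (le_max_left _ _) (hN n hn n hn)
    have hmid : (1/2 : ℝ) • (P (2*m)).1 + (1/2 : ℝ) • (P (2*n)).1 ∈ A :=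
      hAconv ((hmem (2*m)).1 (hEven2 m)).1 ((hmem (2*n)).1 (hEven2 n)).1
        (by norm_num) (by norm_num) (by norm_num)
    have := hkey _ _ _ h1 h2 (hdle hmid ((hmem (2*n+1)).2 (hOdd2 n)).1)
    rw [dist_eq_norm]
    linarith
  have hCv : CauchySeq (fun n => (P (2*n)).2) := by
    rw [Metric.cauchySeq_iff]
    intro ε hε
    obtain ⟨δ, hδ, hkey⟩ := uc_key'' (X := X) hd0 (half_pos hε)
    obtain ⟨N, hN⟩ := hQuni δ hδ
    refine ⟨N, fun m hm n hn => ?_⟩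
    have h1 : ‖(P (2*m)).2 - (P (2*n+1)).2‖ ≤ d + δ :=
      le_trans (le_max_right _ _) (hN m hm n hn)
    have h2 : ‖(P (2*n)).2 - (P (2*n+1)).2‖ ≤ d + δ :=
      le_trans (le_max_right _ _) (hN n hn n hn)
    have hmid : (1/2 : ℝ) • (P (2*m)).2 + (1/2 : ℝ) • (P (2*n)).2 ∈ B :=
      hBconv ((hmem (2*m)).1 (hEven2 m)).2 ((hmem (2*n)).1 (hEven2 n)).2
        (by norm_num) (by norm_num) (by norm_num)
    have hmid' : d ≤ ‖(1/2 : ℝ) • (P (2*m)).2 + (1/2 : ℝ) • (P (2*n)).2 - (P (2*n+1)).2‖ := by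
      rw [← norm_sub_rev]
      exact hdle ((hmem (2*n+1)).2 (hOdd2 n)).2 hmid
    have := hkey _ _ _ h1 h2 hmid'
    rw [dist_eq_norm]
    linarith
  obtain ⟨x, hxlim⟩ := cauchySeq_tendsto_of_complete hCu
  obtain ⟨y, hylim⟩ := cauchySeq_tendsto_of_complete hCv
  have hxA : x ∈ A := hAcl.mem_of_tendsto hxlim
    (Filter.Eventually.of_forall fun n => ((hmem (2*n)).1 (hEven2 n)).1)
  have hyB : y ∈ B := hBcl.mem_of_tendsto hylim
    (Filter.Eventually.of_forall fun n => ((hmem (2*n)).1 (hEven2 n)).2)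
  -- limits witness distances
  have hxconv : ∀ ε : ℝ, 0 < ε → ∃ N, ∀ n ≥ N, ‖x - (P (2*n)).1‖ ≤ ε := by
    intro ε hε
    obtain ⟨N, hN⟩ := (Metric.tendsto_atTop.mp hxlim) ε hε
    exact ⟨N, fun n hn => by rw [norm_sub_rev, ← dist_eq_norm]; exact (hN n hn).le⟩
  have hyconv : ∀ ε : ℝ, 0 < ε → ∃ N, ∀ n ≥ N, ‖y - (P (2*n)).2‖ ≤ ε := by
    intro ε hε
    obtain ⟨N, hN⟩ := (Metric.tendsto_atTop.mp hylim) ε hε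
    exact ⟨N, fun n hn => by rw [norm_sub_rev, ← dist_eq_norm]; exact (hN n hn).le⟩
  have hbound : ∀ ε : ℝ, 0 < ε → ‖x - T x y‖ ≤ d + ε ∧ ‖y - T y x‖ ≤ d + ε := by
    intro ε hε
    have hε3 : 0 < ε/3 := by linarith
    obtain ⟨N₁, hN₁⟩ := hxconv _ hε3
    obtain ⟨N₂, hN₂⟩ := hyconv _ hε3
    obtain ⟨N₃, hN₃⟩ := hDsmall _ hε3
    set n := N₁ + N₂ + N₃ with hn_def
    have hu0 : ‖x - (P (2*n)).1‖ ≤ ε/3 := hN₁ n (by omega)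
    have hu2 : ‖x - (P (2*n+2)).1‖ ≤ ε/3 := by
      have := hN₁ (n+1) (by omega)
      rwa [show 2*(n+1) = 2*n+2 by omega] at this
    have hv0 : ‖y - (P (2*n)).2‖ ≤ ε/3 := hN₂ n (by omega)
    have hv2 : ‖y - (P (2*n+2)).2‖ ≤ ε/3 := by
      have := hN₂ (n+1) (by omega)
      rwa [show 2*(n+1) = 2*n+2 by omega] at this
    have hD : D (2*n) ≤ d + ε/3 := hN₃ (2*n) (by omega)
    have hDu : ‖(P (2*n)).1 - (P (2*n+1)).1‖ ≤ d + ε/3 := le_trans (le_max_left _ _) hD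
    have hDv : ‖(P (2*n)).2 - (P (2*n+1)).2‖ ≤ d + ε/3 := le_trans (le_max_right _ _) hD
    have huB : (P (2*n+1)).1 ∈ B := ((hmem (2*n+1)).2 (hOdd2 n)).1
    have hvA : (P (2*n+1)).2 ∈ A := ((hmem (2*n+1)).2 (hOdd2 n)).2
    have hu1 : ‖x - (P (2*n+1)).1‖ ≤ ε/3 + (d + ε/3) :=
      le_trans (tri'' x (P (2*n)).1 _) (add_le_add hu0 hDu)
    have hv1 : ‖y - (P (2*n+1)).2‖ ≤ ε/3 + (d + ε/3) :=
      le_trans (tri'' y (P (2*n)).2 _) (add_le_add hv0 hDv)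
    set M := max ‖x - (P (2*n+1)).1‖ ‖y - (P (2*n+1)).2‖ with hM_def
    have hMd : d ≤ M := le_trans (hdle hxA huB) (le_max_left _ _)
    have hMle : M ≤ ε/3 + (d + ε/3) := max_le hu1 hv1
    constructor
    · have hc : ‖T x y - (P (2*n+2)).1‖ ≤ M := by
        have e : (2*n+2) = (2*n+1)+1 := by omega
        rw [e, hPsucc1 (2*n+1)]
        have := hT' x hxA y hyB _ huB _ hvA
        have hφ : φ d ≤ φ M := hφle hd0 hMd
        rw [← hM_def] at this
        linarith
      calc ‖x - T x y‖ ≤ ‖x - (P (2*n+2)).1‖ + ‖(P (2*n+2)).1 - T x y‖ := tri'' _ _ _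
      _ ≤ ε/3 + M := add_le_add hu2 (by rw [norm_sub_rev]; exact hc)
      _ ≤ d + ε := by linarith
    · have hc : ‖T y x - (P (2*n+2)).2‖ ≤ M := by
        have e : (2*n+2) = (2*n+1)+1 := by omega
        rw [e, hPsucc2 (2*n+1)]
        have := hT' _ hvA _ huB y hyB x hxA
        have hmax : max ‖(P (2*n+1)).2 - y‖ ‖(P (2*n+1)).1 - x‖ = max ‖x - (P (2*n+1)).1‖ ‖y - (P (2*n+1)).2‖ := by
          rw [norm_sub_rev, norm_sub_rev ((P (2*n+1)).1), max_comm]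
        rw [hmax, ← hM_def] at this
        have hφ : φ d ≤ φ M := hφle hd0 hMd
        rw [norm_sub_rev]
        linarith
      calc ‖y - T y x‖ ≤ ‖y - (P (2*n+2)).2‖ + ‖(P (2*n+2)).2 - T y x‖ := tri'' _ _ _
      _ ≤ ε/3 + M := add_le_add hv2 (by rw [norm_sub_rev]; exact hc)
      _ ≤ d + ε := by linarith
  have hex1 : ‖x - T x y‖ = d := by
    refine le_antisymm ?_ (hdle hxA (hTB x hxA y hyB))
    by_contra h
    push_neg at h
    have := (hbound ((‖x - T x y‖ - d)/2) (by linarith)).1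
    linarith
  have hex2 : ‖y - T y x‖ = d := by
    refine le_antisymm ?_ ?_
    · by_contra h
      push_neg at h
      have := (hbound ((‖y - T y x‖ - d)/2) (by linarith)).2
      linarith
    · rw [norm_sub_rev]
      exact hdle (hTA y hyB x hxA) hyB
  -- uniqueness
  have hfix : ∀ a b : X, a ∈ A → b ∈ B → ‖a - T a b‖ = d → ‖b - T b a‖ = d →
      T (T a b) (T b a) = a ∧ T (T b a) (T a b) = b := by
    intro a b ha hb h1 h2
    have hyb : T a b ∈ B := hTB a ha b hb
    have hxb : T b a ∈ A := hTA b hb a ha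
    have c1 : ‖T (T a b) (T b a) - T a b‖ = d := by
      refine le_antisymm ?_ ?_
      · have hc := hT' a ha b hb (T a b) hyb (T b a) hxb
        rw [h1, show ‖b - T b a‖ = d from h2, max_self] at hc
        rw [norm_sub_rev]
        linarith
      · exact hdle (hTA _ hyb _ hxb) hyb
    have c2 : ‖T (T b a) (T a b) - T b a‖ = d := by
      refine le_antisymm ?_ ?_
      · have hc := hT' (T b a) hxb (T a b) hyb b hb a ha
        rw [norm_sub_rev (T b a) b, norm_sub_rev (T a b) a, h1,
          show ‖b - T b a‖ = d from h2, max_self] at hc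
        exact le_trans hc (by linarith)
      · have := hdle hxb (hTB _ hxb _ hyb)
        rwa [norm_sub_rev] at this
    constructor
    · refine prox_unique'' c1 h1 ?_
      have hmid : (1/2 : ℝ) • T (T a b) (T b a) + (1/2 : ℝ) • a ∈ A :=
        hAconv (hTA _ hyb _ hxb) ha (by norm_num) (by norm_num) (by norm_num)
      exact hdle hmid hyb
    · refine prox_unique'' c2 h2 ?_
      have hmid : (1/2 : ℝ) • T (T b a) (T a b) + (1/2 : ℝ) • b ∈ B :=
        hBconv (hTB _ hxb _ hyb) hb (by norm_num) (by norm_num) (by norm_num)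
      rw [← norm_sub_rev]
      exact hdle hxb hmid
  have huniq : ∀ a b a' b' : X, a ∈ A → b ∈ B → ‖a - T a b‖ = d → ‖b - T b a‖ = d →
      a' ∈ A → b' ∈ B → ‖a' - T a' b'‖ = d → ‖b' - T b' a'‖ = d → a = a' ∧ b = b' := by
    intro a b a' b' ha hb h1 h2 ha' hb' h1' h2'
    obtain ⟨f1, f2⟩ := hfix a b ha hb h1 h2
    obtain ⟨f1', f2'⟩ := hfix a' b' ha' hb' h1' h2'
    have hyb : T a b ∈ B := hTB a ha b hb
    have hxb : T b a ∈ A := hTA b hb a ha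
    have hyb' : T a' b' ∈ B := hTB a' ha' b' hb'
    have hxb' : T b' a' ∈ A := hTA b' hb' a' ha'
    set M := max ‖a - T a' b'‖ ‖b - T b' a'‖ with hM_def
    set M' := max ‖a' - T a b‖ ‖b' - T b a‖ with hM'_def
    have hdM : d ≤ M := le_trans (hdle ha hyb') (le_max_left _ _)
    have hdM' : d ≤ M' := le_trans (hdle ha' hyb) (le_max_left _ _)
    have i1 : ‖a' - T a b‖ ≤ M - φ M + φ d := by
      have hc := hT' a ha b hb (T a' b') hyb' (T b' a') hxb'
      rw [f1'] at hc
      rw [norm_sub_rev]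
      exact le_trans hc (by rw [← hM_def])
    have i2 : ‖b' - T b a‖ ≤ M - φ M + φ d := by
      have hc := hT' (T b' a') hxb' (T a' b') hyb' b hb a ha
      rw [f2'] at hc
      rw [norm_sub_rev (T b' a') b, norm_sub_rev (T a' b') a, max_comm] at hc
      exact le_trans hc (by rw [← hM_def])
    have j1 : ‖a - T a' b'‖ ≤ M' - φ M' + φ d := by
      have hc := hT' a' ha' b' hb' (T a b) hyb (T b a) hxb
      rw [f1] at hc
      rw [norm_sub_rev]
      exact le_trans hc (by rw [← hM'_def])
    have j2 : ‖b - T b' a'‖ ≤ M' - φ M' + φ d := by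
      have hc := hT' (T b a) hxb (T a b) hyb b' hb' a' ha'
      rw [f2] at hc
      rw [norm_sub_rev (T b a) b', norm_sub_rev (T a b) a', max_comm] at hc
      exact le_trans hc (by rw [← hM'_def])
    have hMM' : M' ≤ M - φ M + φ d := max_le i1 i2
    have hM'M : M ≤ M' - φ M' + φ d := max_le j1 j2
    have hφM : φ d ≤ φ M := hφle hd0 hdM
    have hφM' : φ d ≤ φ M' := hφle hd0 hdM'
    have hMd : M = d := by
      refine le_antisymm ?_ hdM
      by_contra h
      push_neg at h
      have := hφlt hd0 h
      linarith
    have hayb' : ‖a - T a' b'‖ = d :=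
      le_antisymm (le_trans (le_max_left _ _) hMd.le) (hdle ha hyb')
    have hbxb' : ‖b - T b' a'‖ = d := by
      refine le_antisymm (le_trans (le_max_right _ _) hMd.le) ?_
      rw [norm_sub_rev]
      exact hdle hxb' hb
    constructor
    · refine prox_unique'' hayb' h1' ?_
      exact hdle (hAconv ha ha' (by norm_num) (by norm_num) (by norm_num)) hyb'
    · refine prox_unique'' hbxb' h2' ?_
      rw [← norm_sub_rev]
      exact hdle hxb' (hBconv hb hb' (by norm_num) (by norm_num) (by norm_num))
  refine ⟨(x, y), ⟨hxA, hyB, hex1, hex2⟩, ?_⟩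
  rintro ⟨a, b⟩ ⟨ha, hb, h1, h2⟩
  obtain ⟨e1, e2⟩ := huniq a b x y ha hb h1 h2 hxA hyB hex1 hex2
  simp [e1, e2]
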